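/- arXiv:1701.00050 — 2 statements merged into one kernel-verified Lean document; each statement's English description precedes it below -/
import Mathlib

section
/- (Clustering identity, general form.) With the three-region MERA setup below, for every operator O_{ACR} ∈ B(H_A ⊗ H_C ⊗ H_R), tr[(ρ_0^A ⊗ ρ_0^{CR}) O_{ACR}] = tr[(ρ_s^{A_s} ⊗ ρ_s^{C_sR}) (Φ_A ⊗ Φ_C ⊗ id_R)(O_{ACR})], where ρ_0^A = tr_{B,C,R} |ρ_0⟩⟨ρ_0|, ρ_0^{CR} = tr_{A,B} |ρ_0⟩⟨ρ_0|, ρ_s^{A_s} = tr_{B_s,C_s,R} |ρ_s⟩⟨ρ_s|, ρ_s^{C_sR} = tr_{A_s,B_s} |ρ_s⟩⟨ρ_s|, and Φ_A ⊗ Φ_C ⊗ id_R is the linear map determined by its values Φ_A(O_A) ⊗ Φ_C(O_C) ⊗ O_R on product operators. -/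
open scoped Kronecker ComplexOrder Matrix Classical

/-- The operator norm of a matrix, i.e. the norm of the induced linear map on Euclidean space. -/
noncomputable def opNorm {n : Type} [Fintype n] [DecidableEq n] (A : Matrix n n ℂ) : ℝ :=
  ‖Matrix.toEuclideanCLM (𝕜 := ℂ) A‖

/-- The positive-semidefinite square root (junk value `0` off the PSD cone). -/
noncomputable def psdSqrt {n : Type} [Fintype n] [DecidableEq n] (A : Matrix n n ℂ) :
    Matrix n n ℂ :=
  if h : A.PosSemidef then (h.1.eigenvectorUnitary : Matrix n n ℂ) *
      Matrix.diagonal ((↑) ∘ Real.sqrt ∘ h.1.eigenvalues) * (star h.1.eigenvectorUnitary : Matrix n n ℂ)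
    else 0

/-- The trace norm `‖A‖₁ = tr √(AᴴA)`. -/
noncomputable def traceNorm {n : Type} [Fintype n] [DecidableEq n] (A : Matrix n n ℂ) : ℝ :=
  ((psdSqrt (Aᴴ * A)).trace).re

/-- Fidelity `F(ρ,σ) = tr √(√ρ σ √ρ)`. -/
noncomputable def fidelity {n : Type} [Fintype n] [DecidableEq n] (ρ σ : Matrix n n ℂ) : ℝ :=
  ((psdSqrt (psdSqrt ρ * σ * psdSqrt ρ)).trace).re

/-- Bures distance `𝔅(ρ,σ) = √(2(1 − F(ρ,σ)))`. -/
noncomputable def bures {n : Type} [Fintype n] [DecidableEq n] (ρ σ : Matrix n n ℂ) : ℝ :=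
  Real.sqrt (2 * (1 - fidelity ρ σ))

/-- The rank-one projector `|ψ⟩⟨ψ|`. -/
def outer {n : Type} [Fintype n] (ψ : n → ℂ) : Matrix n n ℂ :=
  Matrix.of fun i j => ψ i * (starRingEnd ℂ) (ψ j)

/-- Complete positivity of a linear map between matrix algebras: for every `k`, the map
`id_{M_k} ⊗ Φ` (acting blockwise) preserves positive semidefiniteness. -/
def IsCompletelyPositive {n m : Type} [Fintype n] [DecidableEq n] [Fintype m] [DecidableEq m]
    (Φ : Matrix n n ℂ →ₗ[ℂ] Matrix m m ℂ) : Prop :=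
  ∀ (k : ℕ) (M : Matrix (Fin k × n) (Fin k × n) ℂ), M.PosSemidef →
    (Matrix.of fun (p q : Fin k × m) =>
      (Φ (Matrix.of fun a b => M (p.1, a) (q.1, b))) p.2 q.2).PosSemidef

section AuxMera

private lemma aux_traceA {A B C R : Type} [Fintype A] [DecidableEq A] [Fintype B] [DecidableEq B]
    [Fintype C] [DecidableEq C] [Fintype R] [DecidableEq R]
    (Z : Matrix (A × (B × C)) R ℂ) (MA : Matrix A A ℂ) :
    ((Matrix.of fun a a' => ∑ b : B, ∑ c : C, ∑ r : R,
        Z (a,(b,c)) r * (starRingEnd ℂ) (Z (a',(b,c)) r)) * MA).trace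
      = (Zᴴ * ((MA ⊗ₖ ((1 : Matrix B B ℂ) ⊗ₖ (1 : Matrix C C ℂ))) * Z)).trace := by
  simp only [Matrix.trace, Matrix.diag, Matrix.mul_apply, Matrix.of_apply,
    Matrix.conjTranspose_apply, Matrix.kroneckerMap_apply, Matrix.one_apply,
    Fintype.sum_prod_type, Finset.sum_mul, Finset.mul_sum,
    mul_ite, ite_mul, mul_zero, zero_mul, mul_one, one_mul,
    Finset.sum_ite_eq, Finset.sum_ite_eq', Finset.mem_univ, if_true]
  simp only [← Fintype.sum_prod_type']
  refine Fintype.sum_equiv ⟨fun x => (x.2.2.2.2, (x.2.1, (x.2.2.1, (x.2.2.2.1, x.1)))),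
    fun y => (y.2.2.2.2, (y.2.1, (y.2.2.1, (y.2.2.2.1, y.1)))), fun _ => rfl, fun _ => rfl⟩ _ _ ?_
  intro x
  simp only [Equiv.coe_fn_mk, starRingEnd_apply]
  ring

private lemma aux_traceCR {A B C R : Type} [Fintype A] [DecidableEq A] [Fintype B] [DecidableEq B]
    [Fintype C] [DecidableEq C] [Fintype R] [DecidableEq R]
    (Z : Matrix (A × (B × C)) R ℂ) (MC : Matrix C C ℂ) (MR : Matrix R R ℂ) :
    ((Matrix.of fun p q : C × R => ∑ a : A, ∑ b : B,
        Z (a,(b,p.1)) p.2 * (starRingEnd ℂ) (Z (a,(b,q.1)) q.2)) * (MC ⊗ₖ MR)).trace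
      = ((Zᴴ * (((1 : Matrix A A ℂ) ⊗ₖ ((1 : Matrix B B ℂ) ⊗ₖ MC)) * Z)) * MRᵀ).trace := by
  have h1 : ∀ (p : A × (B × C)) (r : R),
      ((((1 : Matrix A A ℂ) ⊗ₖ ((1 : Matrix B B ℂ) ⊗ₖ MC)) * Z) p r)
        = ∑ c' : C, MC p.2.2 c' * Z (p.1,(p.2.1,c')) r := by
    intro p r
    simp [Matrix.mul_apply, Matrix.kroneckerMap_apply, Matrix.one_apply,
      Fintype.sum_prod_type, ite_mul, zero_mul, one_mul,
      Finset.sum_ite_eq, Finset.sum_ite_eq', Finset.mem_univ, if_true]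
  simp only [Matrix.trace, Matrix.diag, Matrix.mul_apply, Matrix.of_apply, Matrix.transpose_apply,
    Matrix.conjTranspose_apply, h1, Matrix.kroneckerMap_apply,
    Fintype.sum_prod_type, Finset.sum_mul, Finset.mul_sum]
  simp only [← Fintype.sum_prod_type']
  refine Fintype.sum_equiv ⟨fun x => (x.2.2.2.1, (x.2.1, (x.2.2.2.2.1, (x.2.2.2.2.2, (x.2.2.1, x.1))))),
    fun y => (y.2.2.2.2.2, (y.2.1, (y.2.2.2.2.1, (y.1, (y.2.2.1, y.2.2.2.1))))),
    fun _ => rfl, fun _ => rfl⟩ _ _ ?_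
  intro x
  simp only [Equiv.coe_fn_mk, starRingEnd_apply]
  ring

private lemma kron_one_scalar {α β : Type} [Fintype α] [DecidableEq α] [Fintype β] [DecidableEq β]
    [Nonempty α] [Nonempty β] (M : Matrix α α ℂ) (N : Matrix β β ℂ)
    (h : M ⊗ₖ N = 1) : ∃ l m : ℂ, M = l • 1 ∧ N = m • 1 ∧ l * m = 1 := by
  obtain ⟨i0⟩ := ‹Nonempty α›
  obtain ⟨j0⟩ := ‹Nonempty β›
  have h' : ∀ i i' j j', M i i' * N j j' = if i = i' ∧ j = j' then 1 else 0 := by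
    intro i i' j j'
    have := congrFun (congrFun h (i,j)) (i',j')
    simpa [Matrix.kroneckerMap_apply, Matrix.one_apply, Prod.ext_iff] using this
  have h00 : M i0 i0 * N j0 j0 = 1 := by simpa using h' i0 i0 j0 j0
  have hN0 : N j0 j0 ≠ 0 := right_ne_zero_of_mul_eq_one h00
  have hM0 : M i0 i0 ≠ 0 := left_ne_zero_of_mul_eq_one h00
  refine ⟨M i0 i0, N j0 j0, ?_, ?_, h00⟩
  · ext i i'
    have h2 := h' i i' j0 j0
    have : M i i' * N j0 j0 = (M i0 i0 • (1 : Matrix α α ℂ)) i i' * N j0 j0 := by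
      rw [h2]
      simp only [Matrix.smul_apply, Matrix.one_apply, smul_eq_mul]
      rcases eq_or_ne i i' with rfl | hne
      · simpa using h00.symm
      · simp [hne]
    exact mul_right_cancel₀ hN0 this
  · ext j j'
    have h2 := h' i0 i0 j j'
    simp only [true_and] at h2
    have : N j j' * M i0 i0 = (N j0 j0 • (1 : Matrix β β ℂ)) j j' * M i0 i0 := by
      rw [mul_comm, h2]
      simp only [Matrix.smul_apply, Matrix.one_apply, smul_eq_mul]
      rcases eq_or_ne j j' with rfl | hne
      · simpa [mul_comm] using h00.symm
      · simp [hne]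
    exact mul_right_cancel₀ hM0 this

private lemma entry_decomp {n p : Type} [Fintype n] [DecidableEq n] [Fintype p] [DecidableEq p]
    (Φ : Matrix n n ℂ →ₗ[ℂ] Matrix p p ℂ) (f : n → n → ℂ) (u v : p) :
    (Φ (Matrix.of f)) u v = ∑ i, ∑ j, f i j * (Φ (Matrix.single i j 1)) u v := by
  have hM : Matrix.of f = ∑ i : n, ∑ j : n, f i j • Matrix.single i j (1:ℂ) := by
    ext a b
    simp [Matrix.sum_apply, Matrix.single, Finset.sum_ite_eq, Finset.sum_ite_eq',
      mul_ite, mul_one, mul_zero, ite_and]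
  rw [hM]
  simp only [map_sum, map_smul, Matrix.sum_apply, Matrix.smul_apply, smul_eq_mul]

private lemma kron_stdBasis {n m k l : Type} [Fintype n] [DecidableEq n] [Fintype m] [DecidableEq m]
    [Fintype k] [DecidableEq k] [Fintype l] [DecidableEq l] (i : n) (j : m) (a : k) (b : l) :
    Matrix.single i j (1:ℂ) ⊗ₖ Matrix.single a b (1:ℂ)
      = Matrix.single (i,a) (j,b) 1 := by
  ext ⟨x,y⟩ ⟨x',y'⟩
  simp only [Matrix.kroneckerMap_apply, Matrix.single, Matrix.of_apply, Prod.mk.injEq]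
  split_ifs <;> simp_all

end AuxMera


set_option maxHeartbeats 1000000 in
/-- clustering identity, general form. With non-overlapping causal cones,
`tr[(ρ_0^A ⊗ ρ_0^{CR}) O_{ACR}] = tr[(ρ_s^{A_s} ⊗ ρ_s^{C_sR}) (Φ_A ⊗ Φ_C ⊗ id_R)(O_{ACR})]`. -/
theorem mera_clustering_identity_general
    {A B C As Bs Cs : Type} [Fintype A] [DecidableEq A] [Fintype B] [DecidableEq B]
    [Fintype C] [DecidableEq C] [Fintype As] [DecidableEq As] [Fintype Bs] [DecidableEq Bs]
    [Fintype Cs] [DecidableEq Cs]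
    -- the MERA isometry `V : H_s → H_0` with non-overlapping causal cones for `A` and `C`
    (V : Matrix (A × (B × C)) (As × (Bs × Cs)) ℂ) (hV : Vᴴ * V = 1)
    (ΦA : Matrix A A ℂ →ₗ[ℂ] Matrix As As ℂ) (ΦC : Matrix C C ℂ →ₗ[ℂ] Matrix Cs Cs ℂ)
    (hloc : ∀ (OA : Matrix A A ℂ) (OC : Matrix C C ℂ),
      Vᴴ * (OA ⊗ₖ ((1 : Matrix B B ℂ) ⊗ₖ OC)) * V
        = ΦA OA ⊗ₖ ((1 : Matrix Bs Bs ℂ) ⊗ₖ ΦC OC))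
    (ρs : Matrix (As × (Bs × Cs)) (As × (Bs × Cs)) ℂ)
    (hρ : ρs.PosSemidef) (hρtr : ρs.trace = 1)
    (U : Matrix (As × (Bs × Cs)) (As × (Bs × Cs)) ℂ)
    (hU : U ∈ Matrix.unitaryGroup (As × (Bs × Cs)) ℂ)
    (OACR : Matrix (A × (C × (As × (Bs × Cs)))) (A × (C × (As × (Bs × Cs)))) ℂ) :
    let Ω : (As × (Bs × Cs)) × (As × (Bs × Cs)) → ℂ := fun p => if p.1 = p.2 then 1 else 0
    let ρsVec : (As × (Bs × Cs)) × (As × (Bs × Cs)) → ℂ := (((hρ.1.eigenvectorUnitary : Matrix (As × (Bs × Cs)) (As × (Bs × Cs)) ℂ) *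
      Matrix.diagonal ((↑) ∘ Real.sqrt ∘ hρ.1.eigenvalues) *
      (star hρ.1.eigenvectorUnitary : Matrix (As × (Bs × Cs)) (As × (Bs × Cs)) ℂ)) ⊗ₖ U).mulVec Ω
    let ρ0Vec : (A × (B × C)) × (As × (Bs × Cs)) → ℂ :=
      (V ⊗ₖ (1 : Matrix (As × (Bs × Cs)) (As × (Bs × Cs)) ℂ)).mulVec ρsVec
    -- reduced states of `|ρ_0⟩⟨ρ_0|`
    let ρ0A : Matrix A A ℂ :=
      Matrix.of fun a a' => ∑ b : B, ∑ c : C, ∑ r : As × (Bs × Cs),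
        outer ρ0Vec ((a, (b, c)), r) ((a', (b, c)), r)
    let ρ0CR : Matrix (C × (As × (Bs × Cs))) (C × (As × (Bs × Cs))) ℂ :=
      Matrix.of fun p q => ∑ a : A, ∑ b : B,
        outer ρ0Vec ((a, (b, p.1)), p.2) ((a, (b, q.1)), q.2)
    -- reduced states of `|ρ_s⟩⟨ρ_s|`
    let ρsAs : Matrix As As ℂ :=
      Matrix.of fun a a' => ∑ b : Bs, ∑ c : Cs, ∑ r : As × (Bs × Cs),
        outer ρsVec ((a, (b, c)), r) ((a', (b, c)), r)
    let ρsCsR : Matrix (Cs × (As × (Bs × Cs))) (Cs × (As × (Bs × Cs))) ℂ :=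
      Matrix.of fun p q => ∑ a : As, ∑ b : Bs,
        outer ρsVec ((a, (b, p.1)), p.2) ((a, (b, q.1)), q.2)
    -- the extension `Φ_A ⊗ Φ_C ⊗ id_R`, acting blockwise
    let ΦACR : Matrix (A × (C × (As × (Bs × Cs)))) (A × (C × (As × (Bs × Cs)))) ℂ →
        Matrix (As × (Cs × (As × (Bs × Cs)))) (As × (Cs × (As × (Bs × Cs)))) ℂ :=
      fun O => Matrix.of fun p q =>
        (ΦC (Matrix.of fun c e =>
          (ΦA (Matrix.of fun a b => O (a, (c, p.2.2)) (b, (e, q.2.2)))) p.1 q.1)) p.2.1 q.2.1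
    ((ρ0A ⊗ₖ ρ0CR) * OACR).trace = ((ρsAs ⊗ₖ ρsCsR) * ΦACR OACR).trace := by
  intro Ω ρsVec ρ0Vec ρ0A ρ0CR ρsAs ρsCsR ΦACR
  -- nonemptiness
  have hSne : Nonempty (As × (Bs × Cs)) := by
    by_contra h
    rw [not_nonempty_iff] at h
    rw [Matrix.trace] at hρtr
    simp [Finset.univ_eq_empty] at hρtr
  obtain ⟨⟨a0, b0, c0⟩⟩ := hSne
  haveI : Nonempty As := ⟨a0⟩
  haveI : Nonempty Bs := ⟨b0⟩
  haveI : Nonempty Cs := ⟨c0⟩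
  -- scalars
  have h1 : ΦA 1 ⊗ₖ ((1 : Matrix Bs Bs ℂ) ⊗ₖ ΦC 1) = (1 : Matrix (As × (Bs × Cs)) (As × (Bs × Cs)) ℂ) := by
    have h := hloc 1 1
    rw [Matrix.one_kronecker_one, Matrix.one_kronecker_one, Matrix.mul_one, hV] at h
    exact h.symm
  obtain ⟨lA, m, hA1, hNm, hlm⟩ := kron_one_scalar (ΦA 1) ((1 : Matrix Bs Bs ℂ) ⊗ₖ ΦC 1) h1
  have hC1 : ΦC 1 = m • (1 : Matrix Cs Cs ℂ) := by
    ext c c'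
    have := congrFun (congrFun hNm (b0, c)) (b0, c')
    simpa [Matrix.kroneckerMap_apply, Matrix.one_apply, Matrix.smul_apply, Prod.ext_iff] using this
  -- vector identifications
  have hWvec : ρsVec = fun p => (((hρ.1.eigenvectorUnitary : Matrix (As × (Bs × Cs)) (As × (Bs × Cs)) ℂ) *
      Matrix.diagonal (Complex.ofReal ∘ Real.sqrt ∘ hρ.1.eigenvalues) *
      (star hρ.1.eigenvectorUnitary : Matrix (As × (Bs × Cs)) (As × (Bs × Cs)) ℂ)) * Uᵀ) p.1 p.2 := by
    funext p
    show ((((hρ.1.eigenvectorUnitary : Matrix (As × (Bs × Cs)) (As × (Bs × Cs)) ℂ) *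
      Matrix.diagonal (Complex.ofReal ∘ Real.sqrt ∘ hρ.1.eigenvalues) *
      (star hρ.1.eigenvectorUnitary : Matrix (As × (Bs × Cs)) (As × (Bs × Cs)) ℂ)) ⊗ₖ U).mulVec Ω) p = _
    generalize ((hρ.1.eigenvectorUnitary : Matrix (As × (Bs × Cs)) (As × (Bs × Cs)) ℂ) *
      Matrix.diagonal (Complex.ofReal ∘ Real.sqrt ∘ hρ.1.eigenvalues) *
      (star hρ.1.eigenvectorUnitary : Matrix (As × (Bs × Cs)) (As × (Bs × Cs)) ℂ)) = S
    simp [Matrix.mulVec, dotProduct, Ω, Fintype.sum_prod_type, Matrix.kroneckerMap_apply,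
      Matrix.mul_apply, Matrix.transpose_apply, mul_ite, mul_zero, mul_one]
  have hXvec : ρ0Vec = fun p => (V * (((hρ.1.eigenvectorUnitary : Matrix (As × (Bs × Cs)) (As × (Bs × Cs)) ℂ) *
      Matrix.diagonal (Complex.ofReal ∘ Real.sqrt ∘ hρ.1.eigenvalues) *
      (star hρ.1.eigenvectorUnitary : Matrix (As × (Bs × Cs)) (As × (Bs × Cs)) ℂ)) * Uᵀ)) p.1 p.2 := by
    funext p
    show ((V ⊗ₖ (1 : Matrix (As × (Bs × Cs)) (As × (Bs × Cs)) ℂ)).mulVec ρsVec) p = _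
    rw [hWvec]
    generalize ((hρ.1.eigenvectorUnitary : Matrix (As × (Bs × Cs)) (As × (Bs × Cs)) ℂ) *
      Matrix.diagonal (Complex.ofReal ∘ Real.sqrt ∘ hρ.1.eigenvalues) *
      (star hρ.1.eigenvectorUnitary : Matrix (As × (Bs × Cs)) (As × (Bs × Cs)) ℂ)) = S
    simp [Matrix.mulVec, dotProduct, hWvec, Fintype.sum_prod_type, Matrix.kroneckerMap_apply,
      Matrix.one_apply, Matrix.mul_apply, mul_ite, mul_zero, ite_mul, zero_mul,
      Finset.sum_ite_eq, Finset.sum_ite_eq', Finset.mem_univ, if_true]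
  set W : Matrix (As × (Bs × Cs)) (As × (Bs × Cs)) ℂ := ((hρ.1.eigenvectorUnitary : Matrix (As × (Bs × Cs)) (As × (Bs × Cs)) ℂ) *
      Matrix.diagonal (Complex.ofReal ∘ Real.sqrt ∘ hρ.1.eigenvalues) *
      (star hρ.1.eigenvectorUnitary : Matrix (As × (Bs × Cs)) (As × (Bs × Cs)) ℂ)) * Uᵀ with hWdef
  set X : Matrix (A × (B × C)) (As × (Bs × Cs)) ℂ := V * W with hXdef
  -- identify reduced matrices
  have hρ0A : ρ0A = Matrix.of fun a a' => ∑ b : B, ∑ c : C, ∑ r : As × (Bs × Cs),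
      X (a,(b,c)) r * (starRingEnd ℂ) (X (a',(b,c)) r) := by
    ext a a'
    show ∑ b : B, ∑ c : C, ∑ r : As × (Bs × Cs),
        outer ρ0Vec ((a, (b, c)), r) ((a', (b, c)), r) = _
    simp [outer, hXvec]
  have hρ0CR : ρ0CR = Matrix.of fun p q : C × (As × (Bs × Cs)) => ∑ a : A, ∑ b : B,
      X (a,(b,p.1)) p.2 * (starRingEnd ℂ) (X (a,(b,q.1)) q.2) := by
    ext p q
    show ∑ a : A, ∑ b : B,
        outer ρ0Vec ((a, (b, p.1)), p.2) ((a, (b, q.1)), q.2) = _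
    simp [outer, hXvec]
  have hρsAs : ρsAs = Matrix.of fun a a' => ∑ b : Bs, ∑ c : Cs, ∑ r : As × (Bs × Cs),
      W (a,(b,c)) r * (starRingEnd ℂ) (W (a',(b,c)) r) := by
    ext a a'
    show ∑ b : Bs, ∑ c : Cs, ∑ r : As × (Bs × Cs),
        outer ρsVec ((a, (b, c)), r) ((a', (b, c)), r) = _
    simp [outer, hWvec]
  have hρsCsR : ρsCsR = Matrix.of fun p q : Cs × (As × (Bs × Cs)) => ∑ a : As, ∑ b : Bs,
      W (a,(b,p.1)) p.2 * (starRingEnd ℂ) (W (a,(b,q.1)) q.2) := by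
    ext p q
    show ∑ a : As, ∑ b : Bs,
        outer ρsVec ((a, (b, p.1)), p.2) ((a, (b, q.1)), q.2) = _
    simp [outer, hWvec]
  -- sandwich identity
  have hsand : ∀ (M : Matrix (A × (B × C)) (A × (B × C)) ℂ),
      Xᴴ * (M * X) = Wᴴ * ((Vᴴ * M * V) * W) := by
    intro M
    rw [hXdef]
    simp only [Matrix.conjTranspose_mul, Matrix.mul_assoc]
  -- the key product identity
  have key : ∀ (MA : Matrix A A ℂ) (MC : Matrix C C ℂ) (MR : Matrix (As × (Bs × Cs)) (As × (Bs × Cs)) ℂ),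
      ((ρ0A ⊗ₖ ρ0CR) * (MA ⊗ₖ (MC ⊗ₖ MR))).trace
        = ((ρsAs ⊗ₖ ρsCsR) * (ΦA MA ⊗ₖ (ΦC MC ⊗ₖ MR))).trace := by
    intro MA MC MR
    rw [← Matrix.mul_kronecker_mul, Matrix.trace_kronecker,
        ← Matrix.mul_kronecker_mul, Matrix.trace_kronecker]
    have e1 : (ρ0A * MA).trace = m * (ρsAs * ΦA MA).trace := by
      rw [hρ0A, aux_traceA X MA, hsand, hloc MA 1, hC1,
        Matrix.kronecker_smul, Matrix.kronecker_smul, Matrix.one_kronecker_one,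
        Matrix.smul_mul, Matrix.mul_smul, Matrix.trace_smul, smul_eq_mul,
        hρsAs, aux_traceA W (ΦA MA), Matrix.one_kronecker_one]
    have e2 : (ρ0CR * (MC ⊗ₖ MR)).trace = lA * (ρsCsR * (ΦC MC ⊗ₖ MR)).trace := by
      rw [hρ0CR, aux_traceCR X MC MR, hsand, hloc 1 MC, hA1,
        Matrix.smul_kronecker, Matrix.smul_mul, Matrix.mul_smul, Matrix.smul_mul,
        Matrix.trace_smul, smul_eq_mul,
        hρsCsR, aux_traceCR W (ΦC MC) MR]
    rw [e1, e2]
    have : m * (ρsAs * ΦA MA).trace * (lA * (ρsCsR * (ΦC MC ⊗ₖ MR)).trace)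
        = (lA * m) * ((ρsAs * ΦA MA).trace * (ρsCsR * (ΦC MC ⊗ₖ MR)).trace) := by ring
    rw [this, hlm, one_mul]
  -- decomposition of OACR into A,C matrix units with S-blocks
  have hOdec : OACR = ∑ a : A, ∑ b : A, ∑ c : C, ∑ e : C,
      Matrix.single a b (1:ℂ) ⊗ₖ (Matrix.single c e (1:ℂ) ⊗ₖ
        Matrix.of fun r r' => OACR (a,(c,r)) (b,(e,r'))) := by
    ext ⟨x,y,r⟩ ⟨x',y',r'⟩
    simp [Matrix.sum_apply, Matrix.kroneckerMap_apply, Matrix.single, ite_and,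
      mul_ite, ite_mul, mul_zero, zero_mul, one_mul, Finset.sum_ite_eq, Finset.sum_ite_eq']
  have hΦdec : ΦACR OACR = ∑ a : A, ∑ b : A, ∑ c : C, ∑ e : C,
      ΦA (Matrix.single a b (1:ℂ)) ⊗ₖ (ΦC (Matrix.single c e (1:ℂ)) ⊗ₖ
        Matrix.of fun r r' => OACR (a,(c,r)) (b,(e,r'))) := by
    ext u v
    show (ΦC (Matrix.of fun c e =>
        (ΦA (Matrix.of fun a b => OACR (a, (c, u.2.2)) (b, (e, v.2.2)))) u.1 v.1)) u.2.1 v.2.1 = _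
    rw [entry_decomp ΦC]
    have hstep : ∀ i j : C, (fun c e =>
          (ΦA (Matrix.of fun a b => OACR (a, (c, u.2.2)) (b, (e, v.2.2)))) u.1 v.1) i j
        = ∑ a : A, ∑ b : A, OACR (a, (i, u.2.2)) (b, (j, v.2.2))
            * (ΦA (Matrix.single a b 1)) u.1 v.1 := by
      intro i j
      simp only
      rw [entry_decomp ΦA]
    simp only [hstep, Matrix.sum_apply, Matrix.kroneckerMap_apply, Matrix.of_apply,
      Finset.sum_mul, Finset.mul_sum]
    simp only [← Fintype.sum_prod_type']
    refine Fintype.sum_equiv ⟨fun x => (x.2.2.1, (x.2.2.2, (x.1, x.2.1))),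
      fun y => (y.2.2.1, (y.2.2.2, (y.1, y.2.1))), fun _ => rfl, fun _ => rfl⟩ _ _ ?_
    intro x
    simp only [Equiv.coe_fn_mk]
    ring
  -- assembly
  calc ((ρ0A ⊗ₖ ρ0CR) * OACR).trace
      = ∑ a : A, ∑ b : A, ∑ c : C, ∑ e : C,
          ((ρ0A ⊗ₖ ρ0CR) * (Matrix.single a b (1:ℂ) ⊗ₖ (Matrix.single c e (1:ℂ) ⊗ₖ
            Matrix.of fun r r' => OACR (a,(c,r)) (b,(e,r'))))).trace := by
        conv_lhs => rw [hOdec]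
        simp only [Matrix.mul_sum, Matrix.trace_sum]
    _ = ∑ a : A, ∑ b : A, ∑ c : C, ∑ e : C,
          ((ρsAs ⊗ₖ ρsCsR) * (ΦA (Matrix.single a b (1:ℂ)) ⊗ₖ
            (ΦC (Matrix.single c e (1:ℂ)) ⊗ₖ
            Matrix.of fun r r' => OACR (a,(c,r)) (b,(e,r'))))).trace := by
        exact Finset.sum_congr rfl fun a _ => Finset.sum_congr rfl fun b _ =>
          Finset.sum_congr rfl fun c _ => Finset.sum_congr rfl fun e _ => key _ _ _
    _ = ((ρsAs ⊗ₖ ρsCsR) * ΦACR OACR).trace := by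
        rw [hΦdec]
        simp only [Matrix.mul_sum, Matrix.trace_sum]
end

section
/- (Core estimate for the emergent light cone.) Let Φ be a gapped transfer operator on M_d(ℂ) as below, let H_E be a finite-dimensional Hilbert space, and let u, u', w, w' ∈ ℂ^d ⊗ H_E be vectors of norm at most 1 such that ⟨u, (1_d ⊗ Y) w'⟩ = ⟨u', (1_d ⊗ Y) w⟩ for every operator Y ∈ B(H_E). Then for every integer m ≥ 1 and all operators O ∈ M_d(ℂ) and Y ∈ B(H_E): |⟨u, (Φ^m(O) ⊗ Y) w'⟩ − ⟨u', (Φ^m(O) ⊗ Y) w⟩| ≤ 2K ‖O‖ ‖Y‖ 2^{−νm}. -/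
open scoped Kronecker ComplexOrder Matrix Classical

section EmergentHelpers

noncomputable def en {n : Type} [Fintype n] (x : n → ℂ) : ℝ :=
  ‖(WithLp.equiv 2 (n → ℂ)).symm x‖

lemma en_nonneg {n : Type} [Fintype n] (x : n → ℂ) : 0 ≤ en x := norm_nonneg _

lemma opNorm_nonneg {n : Type} [Fintype n] [DecidableEq n] (A : Matrix n n ℂ) :
    0 ≤ opNorm A := norm_nonneg _

lemma en_coe {n : Type} [Fintype n] (v : EuclideanSpace ℂ n) : en (⇑v) = ‖v‖ := rfl

lemma en_sq {n : Type} [Fintype n] (x : n → ℂ) :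
    en x ^ 2 = ∑ i, Complex.normSq (x i) := by
  rw [en, EuclideanSpace.norm_eq, Real.sq_sqrt (by positivity)]
  refine Finset.sum_congr rfl fun i _ => ?_
  rw [Complex.sq_norm]; rfl

lemma en_le_one {n : Type} [Fintype n] {x : n → ℂ}
    (h : ∑ i, Complex.normSq (x i) ≤ 1) : en x ≤ 1 := by
  have h2 := en_sq x
  nlinarith [en_nonneg x]

lemma cs_dot {n : Type} [Fintype n] (x y : n → ℂ) :
    ‖star x ⬝ᵥ y‖ ≤ en x * en y := by
  have h := norm_inner_le_norm (𝕜 := ℂ) ((WithLp.equiv 2 (n → ℂ)).symm x)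
      ((WithLp.equiv 2 (n → ℂ)).symm y)
  rw [WithLp.equiv_symm_apply, EuclideanSpace.inner_toLp_toLp, dotProduct_comm] at h
  exact h

lemma en_mulVec {n : Type} [Fintype n] [DecidableEq n] (A : Matrix n n ℂ) (x : n → ℂ) :
    en (A *ᵥ x) ≤ opNorm A * en x := by
  have h := (Matrix.toEuclideanCLM (𝕜 := ℂ) A).le_opNorm ((WithLp.equiv 2 (n → ℂ)).symm x)
  rw [WithLp.equiv_symm_apply, Matrix.toEuclideanCLM_toLp] at h
  exact h

lemma en_sq_eq_re_dot {n : Type} [Fintype n] (x : n → ℂ) :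
    en x ^ 2 = (star x ⬝ᵥ x).re := by
  have h1 := EuclideanSpace.inner_toLp_toLp (𝕜 := ℂ) x x
  have h2 := inner_self_eq_norm_sq (𝕜 := ℂ) ((WithLp.equiv 2 (n → ℂ)).symm x)
  rw [WithLp.equiv_symm_apply, h1] at h2
  rw [en, WithLp.equiv_symm_apply, ← h2, RCLike.re_to_complex, dotProduct_comm]

lemma conj_diag {n : Type} [Fintype n] (M U : Matrix n n ℂ) (i : n) :
    (star U * M * U) i i = star (fun a => U a i) ⬝ᵥ (M *ᵥ fun a => U a i) := by
  simp only [Matrix.mul_apply, Matrix.mulVec, dotProduct, Matrix.star_apply,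
    Pi.star_apply, Finset.sum_mul, Finset.mul_sum]
  rw [Finset.sum_comm]
  refine Finset.sum_congr rfl fun a _ => Finset.sum_congr rfl fun b _ => by
    simp [Matrix.star_apply]; ring

lemma holder {n : Type} [Fintype n] [DecidableEq n] (A B : Matrix n n ℂ) :
    ‖(A * B).trace‖ ≤ opNorm A * traceNorm B := by
  classical
  have h : (Bᴴ * B).PosSemidef := Matrix.posSemidef_conjTranspose_mul_self B
  have hUU : (h.1.eigenvectorUnitary : Matrix n n ℂ) * star (h.1.eigenvectorUnitary : Matrix n n ℂ) = 1 :=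
    Matrix.mem_unitaryGroup_iff.mp h.1.eigenvectorUnitary.2
  have hUU' : star (h.1.eigenvectorUnitary : Matrix n n ℂ) * (h.1.eigenvectorUnitary : Matrix n n ℂ) = 1 :=
    Matrix.mem_unitaryGroup_iff'.mp h.1.eigenvectorUnitary.2
  have htn : traceNorm B = ∑ i, Real.sqrt (h.1.eigenvalues i) := by
    rw [traceNorm, psdSqrt, dif_pos h, Matrix.trace_mul_cycle, hUU',
      Matrix.one_mul, Matrix.trace_diagonal, Complex.re_sum]
    simp
  have hcol : ∀ i : n, (fun a => (h.1.eigenvectorUnitary : Matrix n n ℂ) a i)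
      = ⇑(h.1.eigenvectorBasis i) := by
    intro i; funext a; exact h.1.eigenvectorUnitary_apply a i
  have hdot1 : ∀ i : n, star (⇑(h.1.eigenvectorBasis i)) ⬝ᵥ ⇑(h.1.eigenvectorBasis i) = 1 := by
    intro i
    have := EuclideanSpace.inner_eq_star_dotProduct (𝕜 := ℂ) (h.1.eigenvectorBasis i)
        (h.1.eigenvectorBasis i)
    rw [inner_self_eq_norm_sq_to_K, h.1.eigenvectorBasis.orthonormal.1 i] at this
    rw [dotProduct_comm]; simpa using this.symm
  have hnorm1 : ∀ i : n, en (⇑(h.1.eigenvectorBasis i)) = 1 := by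
    intro i; rw [en_coe, h.1.eigenvectorBasis.orthonormal.1 i]
  have hBcol : ∀ i : n, en (B *ᵥ ⇑(h.1.eigenvectorBasis i)) = Real.sqrt (h.1.eigenvalues i) := by
    intro i
    have hsq : en (B *ᵥ ⇑(h.1.eigenvectorBasis i)) ^ 2 = h.1.eigenvalues i := by
      rw [en_sq_eq_re_dot, Matrix.star_mulVec]
      rw [← Matrix.dotProduct_mulVec, Matrix.mulVec_mulVec, h.1.mulVec_eigenvectorBasis,
        dotProduct_smul, hdot1]
      simp [Complex.real_smul]
    rw [← Real.sqrt_sq (en_nonneg _), hsq]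
  have htr : (A * B).trace = ∑ i, star (⇑(h.1.eigenvectorBasis i))
      ⬝ᵥ (A *ᵥ (B *ᵥ ⇑(h.1.eigenvectorBasis i))) := by
    have h1 : (A * B).trace = (star (h.1.eigenvectorUnitary : Matrix n n ℂ) * (A * B)
        * (h.1.eigenvectorUnitary : Matrix n n ℂ)).trace := by
      rw [Matrix.trace_mul_cycle, hUU, Matrix.one_mul]
    rw [h1, Matrix.trace]
    refine Finset.sum_congr rfl fun i _ => ?_
    rw [Matrix.diag_apply, conj_diag, ← Matrix.mulVec_mulVec, hcol]
  rw [htr, htn]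
  refine le_trans (norm_sum_le _ _) ?_
  rw [Finset.mul_sum]
  refine Finset.sum_le_sum fun i _ => ?_
  calc ‖star (⇑(h.1.eigenvectorBasis i)) ⬝ᵥ (A *ᵥ (B *ᵥ ⇑(h.1.eigenvectorBasis i)))‖
      ≤ en (⇑(h.1.eigenvectorBasis i)) * en (A *ᵥ (B *ᵥ ⇑(h.1.eigenvectorBasis i))) := cs_dot _ _
    _ = en (A *ᵥ (B *ᵥ ⇑(h.1.eigenvectorBasis i))) := by rw [hnorm1, one_mul]
    _ ≤ opNorm A * en (B *ᵥ ⇑(h.1.eigenvectorBasis i)) := en_mulVec _ _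
    _ = opNorm A * Real.sqrt (h.1.eigenvalues i) := by rw [hBcol]

lemma en_kron_one {d : ℕ} {E : Type} [Fintype E] [DecidableEq E]
    (A : Matrix (Fin d) (Fin d) ℂ) (v : Fin d × E → ℂ) :
    en ((A ⊗ₖ (1 : Matrix E E ℂ)) *ᵥ v) ≤ opNorm A * en v := by
  have hsq : en ((A ⊗ₖ (1 : Matrix E E ℂ)) *ᵥ v) ^ 2 ≤ (opNorm A * en v) ^ 2 := by
    have happ : ∀ i e, ((A ⊗ₖ (1 : Matrix E E ℂ)) *ᵥ v) (i, e)
        = (A *ᵥ fun j => v (j, e)) i := by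
      intro i e
      simp only [Matrix.mulVec, dotProduct, Fintype.sum_prod_type,
        Matrix.kroneckerMap_apply, Matrix.one_apply]
      refine Finset.sum_congr rfl fun j _ => ?_
      rw [Finset.sum_eq_single e]
      · simp
      · intro b _ hb; simp [hb.symm]
      · simp
    rw [en_sq, Fintype.sum_prod_type]
    calc ∑ i, ∑ e, Complex.normSq (((A ⊗ₖ (1 : Matrix E E ℂ)) *ᵥ v) (i, e))
        = ∑ e, ∑ i, Complex.normSq ((A *ᵥ fun j => v (j, e)) i) := by
          rw [Finset.sum_comm]
          exact Finset.sum_congr rfl fun e _ => Finset.sum_congr rfl fun i _ => by rw [happ]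
      _ = ∑ e, en (A *ᵥ fun j => v (j, e)) ^ 2 :=
          Finset.sum_congr rfl fun e _ => (en_sq _).symm
      _ ≤ ∑ e, (opNorm A * en fun j => v (j, e)) ^ 2 :=
          Finset.sum_le_sum fun e _ => pow_le_pow_left₀ (en_nonneg _) (en_mulVec _ _) 2
      _ = opNorm A ^ 2 * ∑ e, en (fun j => v (j, e)) ^ 2 := by
          rw [Finset.mul_sum]; exact Finset.sum_congr rfl fun e _ => by ring
      _ = (opNorm A * en v) ^ 2 := by
          rw [mul_pow]
          congr 1
          rw [en_sq, Fintype.sum_prod_type, Finset.sum_comm]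
          exact Finset.sum_congr rfl fun e _ => by rw [en_sq]
  have h0 : 0 ≤ opNorm A * en v := mul_nonneg (opNorm_nonneg _) (en_nonneg _)
  exact (pow_le_pow_iff_left₀ (en_nonneg _) h0 (by norm_num)).mp hsq

lemma en_one_kron {d : ℕ} {E : Type} [Fintype E] [DecidableEq E]
    (Y : Matrix E E ℂ) (v : Fin d × E → ℂ) :
    en (((1 : Matrix (Fin d) (Fin d) ℂ) ⊗ₖ Y) *ᵥ v) ≤ opNorm Y * en v := by
  have hsq : en (((1 : Matrix (Fin d) (Fin d) ℂ) ⊗ₖ Y) *ᵥ v) ^ 2 ≤ (opNorm Y * en v) ^ 2 := by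
    have happ : ∀ i e, (((1 : Matrix (Fin d) (Fin d) ℂ) ⊗ₖ Y) *ᵥ v) (i, e)
        = (Y *ᵥ fun f => v (i, f)) e := by
      intro i e
      simp only [Matrix.mulVec, dotProduct, Fintype.sum_prod_type,
        Matrix.kroneckerMap_apply, Matrix.one_apply]
      rw [Finset.sum_eq_single i]
      · simp
      · intro b _ hb; simp [hb.symm]
      · simp
    rw [en_sq, Fintype.sum_prod_type]
    calc ∑ i, ∑ e, Complex.normSq ((((1 : Matrix (Fin d) (Fin d) ℂ) ⊗ₖ Y) *ᵥ v) (i, e))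
        = ∑ i, ∑ e, Complex.normSq ((Y *ᵥ fun f => v (i, f)) e) :=
          Finset.sum_congr rfl fun i _ => Finset.sum_congr rfl fun e _ => by rw [happ]
      _ = ∑ i, en (Y *ᵥ fun f => v (i, f)) ^ 2 :=
          Finset.sum_congr rfl fun i _ => (en_sq _).symm
      _ ≤ ∑ i, (opNorm Y * en fun f => v (i, f)) ^ 2 :=
          Finset.sum_le_sum fun i _ => pow_le_pow_left₀ (en_nonneg _) (en_mulVec _ _) 2
      _ = opNorm Y ^ 2 * ∑ i, en (fun f => v (i, f)) ^ 2 := by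
          rw [Finset.mul_sum]; exact Finset.sum_congr rfl fun i _ => by ring
      _ = (opNorm Y * en v) ^ 2 := by
          rw [mul_pow]
          congr 1
          rw [en_sq, Fintype.sum_prod_type]
          exact Finset.sum_congr rfl fun i _ => by rw [en_sq]
  have h0 : 0 ≤ opNorm Y * en v := mul_nonneg (opNorm_nonneg _) (en_nonneg _)
  exact (pow_le_pow_iff_left₀ (en_nonneg _) h0 (by norm_num)).mp hsq

lemma en_kron {d : ℕ} {E : Type} [Fintype E] [DecidableEq E]
    (A : Matrix (Fin d) (Fin d) ℂ) (Y : Matrix E E ℂ) (v : Fin d × E → ℂ) :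
    en ((A ⊗ₖ Y) *ᵥ v) ≤ opNorm A * opNorm Y * en v := by
  have hfac : A ⊗ₖ Y = (A ⊗ₖ (1 : Matrix E E ℂ)) * ((1 : Matrix (Fin d) (Fin d) ℂ) ⊗ₖ Y) := by
    rw [← Matrix.mul_kronecker_mul, Matrix.mul_one, Matrix.one_mul]
  rw [hfac, ← Matrix.mulVec_mulVec]
  calc en ((A ⊗ₖ (1 : Matrix E E ℂ)) *ᵥ (((1 : Matrix (Fin d) (Fin d) ℂ) ⊗ₖ Y) *ᵥ v))
      ≤ opNorm A * en (((1 : Matrix (Fin d) (Fin d) ℂ) ⊗ₖ Y) *ᵥ v) := en_kron_one _ _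
    _ ≤ opNorm A * (opNorm Y * en v) :=
        mul_le_mul_of_nonneg_left (en_one_kron _ _) (opNorm_nonneg _)
    _ = opNorm A * opNorm Y * en v := by ring

lemma sum_mulVec' {n : Type} [Fintype n] {ι : Type} (s : Finset ι)
    (M : ι → Matrix n n ℂ) (v : n → ℂ) :
    (∑ k ∈ s, M k) *ᵥ v = ∑ k ∈ s, (M k) *ᵥ v := by
  funext p
  simp [Matrix.mulVec, dotProduct, Matrix.sum_apply, Finset.sum_mul]
  rw [Finset.sum_comm]

lemma dot_sum' {n : Type} [Fintype n] {ι : Type} (s : Finset ι)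
    (x : n → ℂ) (v : ι → n → ℂ) :
    x ⬝ᵥ (∑ k ∈ s, v k) = ∑ k ∈ s, x ⬝ᵥ v k := by
  simp [dotProduct, Finset.sum_apply, Finset.mul_sum]
  rw [Finset.sum_comm]

lemma sum_kronecker' {n m : Type} [Fintype n] [Fintype m] {ι : Type} (s : Finset ι)
    (M : ι → Matrix n n ℂ) (Y : Matrix m m ℂ) :
    (∑ k ∈ s, M k) ⊗ₖ Y = ∑ k ∈ s, (M k) ⊗ₖ Y := by
  ext p q
  simp [Matrix.kroneckerMap_apply, Matrix.sum_apply, Finset.sum_mul]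

lemma iter_formula {d K : ℕ}
    (lam : Fin (K + 1) → ℂ) (L R : Fin (K + 1) → Matrix (Fin d) (Fin d) ℂ)
    (hbi : ∀ k l, (L k * R l).trace = if k = l then 1 else 0)
    (Φ : Matrix (Fin d) (Fin d) ℂ → Matrix (Fin d) (Fin d) ℂ)
    (hΦ : ∀ O, Φ O = ∑ k, (lam k * (O * R k).trace) • L k)
    (m : ℕ) (hm : 1 ≤ m) (O : Matrix (Fin d) (Fin d) ℂ) :
    Φ^[m] O = ∑ k, (lam k ^ m * (O * R k).trace) • L k := by
  have key : ∀ (c : Fin (K + 1) → ℂ), Φ (∑ k, c k • L k) = ∑ l, (lam l * c l) • L l := by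
    intro c
    rw [hΦ]
    refine Finset.sum_congr rfl fun l _ => ?_
    have : ((∑ k, c k • L k) * R l).trace = c l := by
      rw [Finset.sum_mul, Matrix.trace_sum]
      simp only [Matrix.smul_mul, Matrix.trace_smul, hbi, smul_eq_mul, mul_ite, mul_one, mul_zero]
      simp
    rw [this]
  induction m with
  | zero => omega
  | succ p ih =>
    rcases Nat.eq_or_lt_of_le hm with h1 | h1
    · have hp : p = 0 := by omega
      subst hp
      rw [Function.iterate_succ_apply, Function.iterate_zero_apply, hΦ]
      simp [pow_one]
    · have hp : 1 ≤ p := by omega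
      rw [Function.iterate_succ_apply', ih hp, key]
      refine Finset.sum_congr rfl fun l _ => ?_
      congr 1
      ring

end EmergentHelpers

/-- core estimate for the emergent light cone. For a gapped transfer
operator `Φ` on `M_d(ℂ)` and vectors `u, u', w, w'` of norm at most one with
`⟨u,(1 ⊗ Y)w'⟩ = ⟨u',(1 ⊗ Y)w⟩` for all `Y`, one has for every `m ≥ 1`:
`|⟨u,(Φ^m(O) ⊗ Y)w'⟩ − ⟨u',(Φ^m(O) ⊗ Y)w⟩| ≤ 2K ‖O‖ ‖Y‖ 2^{−νm}`. -/
theorem emergent_lightcone_core_estimate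
    {d K : ℕ} {E : Type} [Fintype E] [DecidableEq E]
    (ν : ℝ) (hν : 0 < ν)
    (lam : Fin (K + 1) → ℂ) (L R : Fin (K + 1) → Matrix (Fin d) (Fin d) ℂ)
    (hlam0 : lam 0 = 1) (hL0 : L 0 = 1)
    (hbi : ∀ k l, (L k * R l).trace = if k = l then 1 else 0)
    (hLnorm : ∀ k, opNorm (L k) ≤ 1) (hRnorm : ∀ k, traceNorm (R k) ≤ 1)
    (hgap : ∀ k, k ≠ 0 → ‖lam k‖ ≤ (2 : ℝ) ^ (-ν))
    (Φ : Matrix (Fin d) (Fin d) ℂ → Matrix (Fin d) (Fin d) ℂ)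
    (hΦ : ∀ O, Φ O = ∑ k, (lam k * (O * R k).trace) • L k)
    (u u' w w' : Fin d × E → ℂ)
    (hu : ∑ i, Complex.normSq (u i) ≤ 1) (hu' : ∑ i, Complex.normSq (u' i) ≤ 1)
    (hw : ∑ i, Complex.normSq (w i) ≤ 1) (hw' : ∑ i, Complex.normSq (w' i) ≤ 1)
    (hmatch : ∀ Y : Matrix E E ℂ,
      star u ⬝ᵥ ((1 : Matrix (Fin d) (Fin d) ℂ) ⊗ₖ Y).mulVec w'
        = star u' ⬝ᵥ ((1 : Matrix (Fin d) (Fin d) ℂ) ⊗ₖ Y).mulVec w)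
    (m : ℕ) (hm : 1 ≤ m)
    (O : Matrix (Fin d) (Fin d) ℂ) (Y : Matrix E E ℂ) :
    ‖star u ⬝ᵥ ((Φ^[m] O) ⊗ₖ Y).mulVec w'
        - star u' ⬝ᵥ ((Φ^[m] O) ⊗ₖ Y).mulVec w‖
      ≤ 2 * K * opNorm O * opNorm Y * (2 : ℝ) ^ (-(ν * m)) := by
  classical
  have hform := iter_formula lam L R hbi Φ hΦ m hm O
  set c : Fin (K + 1) → ℂ := fun k => lam k ^ m * (O * R k).trace with hc
  set t : Fin (K + 1) → ℂ := fun k =>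
    star u ⬝ᵥ ((L k ⊗ₖ Y) *ᵥ w') - star u' ⬝ᵥ ((L k ⊗ₖ Y) *ᵥ w) with ht
  have hdot : ∀ (x y : Fin d × E → ℂ),
      star x ⬝ᵥ ((∑ k, c k • L k) ⊗ₖ Y) *ᵥ y
        = ∑ k, c k * (star x ⬝ᵥ ((L k ⊗ₖ Y) *ᵥ y)) := by
    intro x y
    rw [show (∑ k, c k • L k) = ∑ k, (fun k => c k • L k) k from rfl, sum_kronecker']
    simp only [Matrix.smul_kronecker]
    rw [show (∑ k, (fun k => c k • (L k ⊗ₖ Y)) k) = ∑ k, (fun k => c k • (L k ⊗ₖ Y)) k from rfl,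
      sum_mulVec']
    simp only [Matrix.smul_mulVec]
    rw [dot_sum']
    simp only [dotProduct_smul, smul_eq_mul]
  have hexpand : star u ⬝ᵥ ((Φ^[m] O) ⊗ₖ Y) *ᵥ w' - star u' ⬝ᵥ ((Φ^[m] O) ⊗ₖ Y) *ᵥ w
      = ∑ k, c k * t k := by
    rw [hform, hdot, hdot, ← Finset.sum_sub_distrib]
    exact Finset.sum_congr rfl fun k _ => by rw [ht]; ring
  have ht0 : c 0 * t 0 = 0 := by
    have h0 : t 0 = 0 := by
      rw [ht]
      simp only [hL0, sub_eq_zero]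
      exact hmatch Y
    rw [h0, mul_zero]
  have hpow : ((2 : ℝ) ^ (-ν)) ^ m = (2 : ℝ) ^ (-(ν * m)) := by
    rw [← Real.rpow_natCast ((2 : ℝ) ^ (-ν)) m, ← Real.rpow_mul (by norm_num)]
    congr 1
    push_cast
    ring
  have hterm : ∀ (x y : Fin d × E → ℂ), en x ≤ 1 → en y ≤ 1 → ∀ k : Fin (K + 1),
      ‖star x ⬝ᵥ ((L k ⊗ₖ Y) *ᵥ y)‖ ≤ opNorm Y := by
    intro x y hx hy k
    have h1 := cs_dot x ((L k ⊗ₖ Y) *ᵥ y)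
    have h2 := en_kron (L k) Y y
    have h3 := hLnorm k
    have h4 := en_nonneg x
    have h5 := en_nonneg ((L k ⊗ₖ Y) *ᵥ y)
    have h6 := opNorm_nonneg (L k)
    have h7 := opNorm_nonneg Y
    have h8 := en_nonneg y
    calc ‖star x ⬝ᵥ ((L k ⊗ₖ Y) *ᵥ y)‖
        ≤ en x * en ((L k ⊗ₖ Y) *ᵥ y) := h1
      _ ≤ 1 * (opNorm (L k) * opNorm Y * en y) :=
          mul_le_mul hx h2 h5 zero_le_one
      _ = opNorm (L k) * (opNorm Y * en y) := by ring
      _ ≤ 1 * (opNorm Y * 1) := by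
          refine mul_le_mul h3 ?_ (mul_nonneg h7 h8) zero_le_one
          exact mul_le_mul le_rfl hy h8 h7
      _ = opNorm Y := by ring
  have hu1 : en u ≤ 1 := en_le_one hu
  have hu'1 : en u' ≤ 1 := en_le_one hu'
  have hw1 : en w ≤ 1 := en_le_one hw
  have hw'1 : en w' ≤ 1 := en_le_one hw'
  have hbound : ∀ k ∈ Finset.univ.erase (0 : Fin (K + 1)),
      ‖c k * t k‖ ≤ ((2 : ℝ) ^ (-(ν * m)) * opNorm O) * (2 * opNorm Y) := by
    intro k hk
    have hk0 : k ≠ 0 := (Finset.mem_erase.mp hk).1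
    have hck : ‖c k‖ ≤ (2 : ℝ) ^ (-(ν * m)) * opNorm O := by
      rw [hc]
      simp only
      rw [norm_mul, norm_pow]
      have h1 : ‖lam k‖ ^ m ≤ ((2 : ℝ) ^ (-ν)) ^ m :=
        pow_le_pow_left₀ (norm_nonneg _) (hgap k hk0) m
      have h2 : ‖(O * R k).trace‖ ≤ opNorm O := by
        refine le_trans (holder O (R k)) ?_
        have := hRnorm k
        nlinarith [opNorm_nonneg O]
      rw [← hpow]
      exact mul_le_mul h1 h2 (norm_nonneg _) (by positivity)
    have htk : ‖t k‖ ≤ 2 * opNorm Y := by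
      rw [ht]
      simp only
      have htri : ∀ a b : ℂ, ‖a - b‖ ≤ ‖a‖ + ‖b‖ := by
        intro a b
        exact norm_sub_le _ _
      refine le_trans (htri _ _) ?_
      have hb1 := hterm u w' hu1 hw'1 k
      have hb2 := hterm u' w hu'1 hw1 k
      linarith
    rw [norm_mul]
    exact mul_le_mul hck htk (norm_nonneg _)
      (mul_nonneg (Real.rpow_nonneg (by norm_num) _) (opNorm_nonneg O))
  rw [hexpand, ← Finset.sum_erase (f := fun k => c k * t k) Finset.univ ht0]
  refine le_trans (norm_sum_le _ _) ?_
  refine le_trans (Finset.sum_le_card_nsmul _ _ _ hbound) ?_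
  rw [Finset.card_erase_of_mem (Finset.mem_univ 0), Finset.card_univ, Fintype.card_fin,
    Nat.add_sub_cancel, nsmul_eq_mul]
  ring_nf
  exact le_refl _
end
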